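/- Let V be a finite-dimensional simple Jordan pair over an algebraically closed field of characteristic not 2, graded by an abelian group G, and let t : V⁺ × V⁻ → F be the generic trace of V. Then t is homogeneous of degree 0: whenever t(V⁺_g, V⁻_h) ≠ 0 one has g + h = 0. -/

import Mathlib

set_option linter.unusedSectionVars false


open TensorProduct

open TensorProduct

/-- A (linear) Jordan pair over a field `F`. -/
structure JordanPair (F : Type) [Field F] (Vp Vm : Type)
    [AddCommGroup Vp] [Module F Vp] [AddCommGroup Vm] [Module F Vm] where
  Dp : Vp →ₗ[F] Vm →ₗ[F] Vp →ₗ[F] Vp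
  Dm : Vm →ₗ[F] Vp →ₗ[F] Vm →ₗ[F] Vm
  symm_p : ∀ x y z, Dp x y z = Dp z y x
  symm_m : ∀ x y z, Dm x y z = Dm z y x
  ljp2_p : ∀ x y u v z,
    Dp x y (Dp u v z) - Dp u v (Dp x y z) = Dp (Dp x y u) v z - Dp u (Dm y x v) z
  ljp2_m : ∀ x y u v z,
    Dm x y (Dm u v z) - Dm u v (Dm x y z) = Dm (Dm x y u) v z - Dm u (Dp y x v) z

/-- A grading of a Jordan pair by an abelian group `G`. -/
structure JPGrading {F : Type} [Field F] {Vp Vm : Type}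
    [AddCommGroup Vp] [Module F Vp] [AddCommGroup Vm] [Module F Vm]
    (G : Type) [AddCommGroup G] [DecidableEq G] (P : JordanPair F Vp Vm) where
  gp : G → Submodule F Vp
  gm : G → Submodule F Vm
  int_p : DirectSum.IsInternal gp
  int_m : DirectSum.IsInternal gm
  mul_p : ∀ g h k, ∀ x ∈ gp g, ∀ y ∈ gm h, ∀ z ∈ gp k, P.Dp x y z ∈ gp (g + h + k)
  mul_m : ∀ g h k, ∀ x ∈ gm g, ∀ y ∈ gp h, ∀ z ∈ gm k, P.Dm x y z ∈ gm (g + h + k)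

/-- An ideal of a Jordan pair. -/
def JordanPair.IsIdealPair {F : Type} [Field F] {Vp Vm : Type}
    [AddCommGroup Vp] [Module F Vp] [AddCommGroup Vm] [Module F Vm]
    (P : JordanPair F Vp Vm) (Ip : Submodule F Vp) (Im : Submodule F Vm) : Prop :=
  (∀ x y z, x ∈ Ip → P.Dp x y z ∈ Ip) ∧ (∀ x y z, y ∈ Im → P.Dp x y z ∈ Ip) ∧
  (∀ x y z, x ∈ Im → P.Dm x y z ∈ Im) ∧ (∀ x y z, y ∈ Ip → P.Dm x y z ∈ Im)

/-- A simple Jordan pair: nonzero products and no proper nonzero ideals. -/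
def JordanPair.IsSimplePair {F : Type} [Field F] {Vp Vm : Type}
    [AddCommGroup Vp] [Module F Vp] [AddCommGroup Vm] [Module F Vm]
    (P : JordanPair F Vp Vm) : Prop :=
  P.Dp ≠ 0 ∧ P.Dm ≠ 0 ∧
  ∀ Ip Im, P.IsIdealPair Ip Im → (Ip = ⊥ ∧ Im = ⊥) ∨ (Ip = ⊤ ∧ Im = ⊤)

section Helpers

variable {F : Type} [Field F] {R : Type} [CommRing R] [Algebra F R]

theorem extR {M N : Type} [AddCommGroup M] [Module F M] [AddCommGroup N] [Module R N]
    {f g : R ⊗[F] M →ₗ[R] N} (h : ∀ m : M, f ((1 : R) ⊗ₜ[F] m) = g ((1 : R) ⊗ₜ[F] m)) :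
    f = g := by
  ext a
  induction a using TensorProduct.induction_on with
  | zero => simp
  | tmul r m =>
      have : (r ⊗ₜ[F] m : R ⊗[F] M) = r • ((1 : R) ⊗ₜ[F] m) := by
        rw [TensorProduct.smul_tmul', smul_eq_mul, mul_one]
      rw [this, map_smul, map_smul, h]
  | add x y hx hy => rw [map_add, map_add, hx, hy]

noncomputable def triBC {M N P Q : Type} [AddCommGroup M] [Module F M] [AddCommGroup N]
    [Module F N] [AddCommGroup P] [Module F P] [AddCommGroup Q] [Module F Q]
    (D : M →ₗ[F] N →ₗ[F] P →ₗ[F] Q) :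
    R ⊗[F] M →ₗ[R] R ⊗[F] N →ₗ[R] R ⊗[F] P →ₗ[R] R ⊗[F] Q :=
  LinearMap.liftBaseChange R
  { toFun := fun x => LinearMap.liftBaseChange R
      { toFun := fun y => (D x y).baseChange R
        map_add' := fun y1 y2 => by simp only [map_add, LinearMap.baseChange_add]
        map_smul' := fun c y => by
          simp only [map_smul, RingHom.id_apply, LinearMap.baseChange_smul] }
    map_add' := fun x1 x2 => by
      refine extR (M := N) (N := R ⊗[F] P →ₗ[R] R ⊗[F] Q) ?_; intro y
      simp [map_add, LinearMap.baseChange_add]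
    map_smul' := fun c x => by
      refine extR (M := N) (N := R ⊗[F] P →ₗ[R] R ⊗[F] Q) ?_; intro y
      simp [map_smul, LinearMap.baseChange_smul] }

theorem triBC_tmul {M N P Q : Type} [AddCommGroup M] [Module F M] [AddCommGroup N]
    [Module F N] [AddCommGroup P] [Module F P] [AddCommGroup Q] [Module F Q]
    (D : M →ₗ[F] N →ₗ[F] P →ₗ[F] Q) (r s u : R) (x : M) (y : N) (z : P) :
    triBC D (r ⊗ₜ[F] x) (s ⊗ₜ[F] y) (u ⊗ₜ[F] z) = (r * s * u) ⊗ₜ[F] D x y z := by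
  simp [triBC, TensorProduct.smul_tmul', smul_eq_mul, mul_assoc]

noncomputable def biBC {M N : Type} [AddCommGroup M] [Module F M] [AddCommGroup N]
    [Module F N] (t : M →ₗ[F] N →ₗ[F] F) :
    R ⊗[F] M →ₗ[R] R ⊗[F] N →ₗ[R] R :=
  LinearMap.liftBaseChange R
  { toFun := fun x => LinearMap.liftBaseChange R ((Algebra.linearMap F R).comp (t x))
    map_add' := fun x1 x2 => by apply extR; intro y; simp
    map_smul' := fun c x => by apply extR; intro y; simp [Algebra.smul_def] }

theorem biBC_tmul {M N : Type} [AddCommGroup M] [Module F M] [AddCommGroup N]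
    [Module F N] (t : M →ₗ[F] N →ₗ[F] F) (r s : R) (x : M) (y : N) :
    biBC t (r ⊗ₜ[F] x) (s ⊗ₜ[F] y) = r * s * algebraMap F R (t x y) := by
  simp [biBC, Algebra.smul_def, mul_assoc]

end Helpers

section Grad

variable {F : Type} [Field F] {G : Type} [AddCommGroup G] [DecidableEq G]
variable {M : Type} [AddCommGroup M] [Module F M]

/-- The map sending a homogeneous element `x` of degree `g` to `c g ⊗ x`. -/
noncomputable def psiMap (A : G → Submodule F M) (hA : DirectSum.IsInternal A)
    (c : G → AddMonoidAlgebra F G) : M →ₗ[F] AddMonoidAlgebra F G ⊗[F] M :=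
  (DirectSum.toModule F G (AddMonoidAlgebra F G ⊗[F] M) fun g =>
      (TensorProduct.mk F (AddMonoidAlgebra F G) M (c g)).comp (A g).subtype).comp
    (LinearEquiv.ofBijective (DirectSum.coeLinearMap A) hA).symm.toLinearMap

theorem psiMap_apply (A : G → Submodule F M) (hA : DirectSum.IsInternal A)
    (c : G → AddMonoidAlgebra F G) {g : G} {x : M} (hx : x ∈ A g) :
    psiMap A hA c x = c g ⊗ₜ[F] x := by
  have h1 : (LinearEquiv.ofBijective (DirectSum.coeLinearMap A) hA).symm x
      = DirectSum.lof F G (fun g => A g) g ⟨x, hx⟩ := by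
    rw [LinearEquiv.symm_apply_eq]
    show x = DirectSum.coeLinearMap A (DirectSum.lof F G (fun g => A g) g ⟨x, hx⟩)
    rw [DirectSum.lof_eq_of,
      DirectSum.coeLinearMap_of]
  simp only [psiMap, LinearMap.comp_apply, LinearEquiv.coe_coe, h1, DirectSum.toModule_lof]
  rfl

end Grad

section Grad2

variable {F : Type} [Field F] {G : Type} [AddCommGroup G] [DecidableEq G]
variable {M : Type} [AddCommGroup M] [Module F M]

theorem phi_comp_aux (A : G → Submodule F M) (hA : DirectSum.IsInternal A)
    (c1 c2 : G → AddMonoidAlgebra F G) (hc : ∀ g, c1 g * c2 g = 1) (m : M) :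
    LinearMap.liftBaseChange (AddMonoidAlgebra F G) (psiMap A hA c1)
      (psiMap A hA c2 m) = (1 : AddMonoidAlgebra F G) ⊗ₜ[F] m := by
  have hm : m ∈ ⨆ g, A g := by rw [hA.submodule_iSup_eq_top]; trivial
  refine Submodule.iSup_induction (motive := fun m => LinearMap.liftBaseChange (AddMonoidAlgebra F G)
      (psiMap A hA c1) (psiMap A hA c2 m) = (1 : AddMonoidAlgebra F G) ⊗ₜ[F] m) A hm ?_ (by simp) ?_
  · intro g x hx
    rw [psiMap_apply A hA c2 hx, LinearMap.liftBaseChange_tmul,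
      psiMap_apply A hA c1 hx, TensorProduct.smul_tmul', smul_eq_mul, mul_comm, hc]
  · intro x y hx hy
    rw [map_add, map_add, hx, hy, TensorProduct.tmul_add]

/-- The automorphism of `F[G] ⊗ M` given by the grading. -/
noncomputable def phiEquiv (A : G → Submodule F M) (hA : DirectSum.IsInternal A) :
    (AddMonoidAlgebra F G ⊗[F] M) ≃ₗ[AddMonoidAlgebra F G] (AddMonoidAlgebra F G ⊗[F] M) :=
  LinearEquiv.ofLinear
    (LinearMap.liftBaseChange _ (psiMap A hA fun g => AddMonoidAlgebra.single g 1))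
    (LinearMap.liftBaseChange _ (psiMap A hA fun g => AddMonoidAlgebra.single (-g) 1))
    (extR fun m => by
      rw [LinearMap.comp_apply, LinearMap.id_apply, LinearMap.liftBaseChange_one_tmul]
      exact phi_comp_aux A hA _ _ (fun g => by
        rw [AddMonoidAlgebra.single_mul_single, add_neg_cancel, mul_one]; rfl) m)
    (extR fun m => by
      rw [LinearMap.comp_apply, LinearMap.id_apply, LinearMap.liftBaseChange_one_tmul]
      exact phi_comp_aux A hA _ _ (fun g => by
        rw [AddMonoidAlgebra.single_mul_single, neg_add_cancel, mul_one]; rfl) m)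

theorem phiEquiv_one_tmul (A : G → Submodule F M) (hA : DirectSum.IsInternal A)
    {g : G} {x : M} (hx : x ∈ A g) :
    phiEquiv A hA ((1 : AddMonoidAlgebra F G) ⊗ₜ[F] x) = AddMonoidAlgebra.single g 1 ⊗ₜ[F] x := by
  show LinearMap.liftBaseChange _ (psiMap A hA fun g => AddMonoidAlgebra.single g 1)
      ((1 : AddMonoidAlgebra F G) ⊗ₜ[F] x) = _
  rw [LinearMap.liftBaseChange_one_tmul, psiMap_apply A hA _ hx]

theorem span_hom_eq_top (A : G → Submodule F M) (hA : DirectSum.IsInternal A) :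
    Submodule.span (AddMonoidAlgebra F G)
      {a : AddMonoidAlgebra F G ⊗[F] M | ∃ g x, x ∈ A g ∧ a = (1 : AddMonoidAlgebra F G) ⊗ₜ[F] x}
      = ⊤ := by
  set S := {a : AddMonoidAlgebra F G ⊗[F] M | ∃ g x, x ∈ A g ∧ a = (1 : AddMonoidAlgebra F G) ⊗ₜ[F] x}
  have h1 : ∀ m : M, ((1 : AddMonoidAlgebra F G) ⊗ₜ[F] m) ∈ Submodule.span (AddMonoidAlgebra F G) S := by
    intro m
    have hm : m ∈ ⨆ g, A g := by rw [hA.submodule_iSup_eq_top]; trivial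
    refine Submodule.iSup_induction
      (motive := fun m => ((1 : AddMonoidAlgebra F G) ⊗ₜ[F] m)
        ∈ Submodule.span (AddMonoidAlgebra F G) S) A hm ?_ ?_ ?_
    · exact fun g x hx => Submodule.subset_span ⟨g, x, hx, rfl⟩
    · simpa using Submodule.zero_mem (M := AddMonoidAlgebra F G ⊗[F] M) (Submodule.span (AddMonoidAlgebra F G) S)
    · intro x y hx hy
      show ((1 : AddMonoidAlgebra F G) ⊗ₜ[F] (x + y)) ∈ _
      rw [TensorProduct.tmul_add]; exact Submodule.add_mem _ hx hy
  rw [eq_top_iff]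
  rintro a -
  induction a using TensorProduct.induction_on with
  | zero => exact Submodule.zero_mem _
  | tmul r m =>
      have : (r ⊗ₜ[F] m : AddMonoidAlgebra F G ⊗[F] M) = r • ((1 : AddMonoidAlgebra F G) ⊗ₜ[F] m) := by
        rw [TensorProduct.smul_tmul', smul_eq_mul, mul_one]
      rw [this]; exact Submodule.smul_mem _ _ (h1 m)
  | add x y hx hy => exact Submodule.add_mem _ hx hy

end Grad2

section Equivariance

variable {F : Type} [Field F] {G : Type} [AddCommGroup G] [DecidableEq G]
variable {Vp Vm : Type} [AddCommGroup Vp] [Module F Vp] [AddCommGroup Vm] [Module F Vm]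

set_option maxHeartbeats 1000000 in
theorem phi_triBC_comm (A : G → Submodule F Vp) (B : G → Submodule F Vm)
    (hA : DirectSum.IsInternal A) (hB : DirectSum.IsInternal B)
    (D : Vp →ₗ[F] Vm →ₗ[F] Vp →ₗ[F] Vp)
    (hmul : ∀ g h k : G, ∀ x ∈ A g, ∀ y ∈ B h, ∀ z ∈ A k, D x y z ∈ A (g + h + k))
    (a c : AddMonoidAlgebra F G ⊗[F] Vp) (b : AddMonoidAlgebra F G ⊗[F] Vm) :
    phiEquiv A hA (triBC D a b c)
      = triBC D (phiEquiv A hA a) (phiEquiv B hB b) (phiEquiv A hA c) := by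
  have ha : a ∈ Submodule.span (AddMonoidAlgebra F G)
      {a : AddMonoidAlgebra F G ⊗[F] Vp | ∃ g x, x ∈ A g ∧ a = (1 : AddMonoidAlgebra F G) ⊗ₜ[F] x} := by
    rw [span_hom_eq_top A hA]; trivial
  have hb : b ∈ Submodule.span (AddMonoidAlgebra F G)
      {b : AddMonoidAlgebra F G ⊗[F] Vm | ∃ g y, y ∈ B g ∧ b = (1 : AddMonoidAlgebra F G) ⊗ₜ[F] y} := by
    rw [span_hom_eq_top B hB]; trivial
  have hc : c ∈ Submodule.span (AddMonoidAlgebra F G)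
      {a : AddMonoidAlgebra F G ⊗[F] Vp | ∃ g x, x ∈ A g ∧ a = (1 : AddMonoidAlgebra F G) ⊗ₜ[F] x} := by
    rw [span_hom_eq_top A hA]; trivial
  induction ha using Submodule.span_induction with
  | mem a hmem =>
    induction hb using Submodule.span_induction with
    | mem b hmemb =>
      induction hc using Submodule.span_induction with
      | mem c hmemc =>
        obtain ⟨ga, x, hxa, rfl⟩ := hmem
        obtain ⟨gb, y, hyb, rfl⟩ := hmemb
        obtain ⟨gc, z, hzc, rfl⟩ := hmemc
        rw [triBC_tmul, one_mul, one_mul,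
          phiEquiv_one_tmul A hA (hmul _ _ _ _ hxa _ hyb _ hzc),
          phiEquiv_one_tmul A hA hxa, phiEquiv_one_tmul B hB hyb,
          phiEquiv_one_tmul A hA hzc, triBC_tmul,
          AddMonoidAlgebra.single_mul_single, AddMonoidAlgebra.single_mul_single,
          one_mul, one_mul]
      | zero => simp
      | add c1 c2 hc1 hc2 ih1 ih2 => simp only [map_add, ih1, ih2]
      | smul r c1 hc1 ih => simp only [map_smul, ih]
    | zero => simp
    | add b1 b2 hb1 hb2 ih1 ih2 =>
        simp only [map_add, LinearMap.add_apply, map_add, ih1, ih2]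
    | smul r b1 hb1 ih =>
        simp only [map_smul, LinearMap.smul_apply, map_smul, ih]
  | zero => simp
  | add a1 a2 ha1 ha2 ih1 ih2 =>
      simp only [map_add, LinearMap.add_apply, ih1, ih2]
  | smul r a1 ha1 ih =>
      simp only [map_smul, LinearMap.smul_apply, ih]

end Equivariance

/-- The generic trace `t` of a finite-dimensional simple Jordan pair over an
algebraically closed field of characteristic not 2 is homogeneous with respect
to any grading by an abelian group: if `t(V⁺_g, V⁻_h) ≠ 0` then `g + h = 0`.
The generic trace is encoded here via its characteristic property used in the
proof: invariance under all `R`-point automorphisms of the pair, for every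
commutative unital `F`-algebra `R`. -/
theorem stmt_6 (F : Type) [Field F] [IsAlgClosed F] (hchar : (2 : F) ≠ 0)
    (Vp Vm : Type) [AddCommGroup Vp] [Module F Vp] [AddCommGroup Vm] [Module F Vm]
    [FiniteDimensional F Vp] [FiniteDimensional F Vm]
    (P : JordanPair F Vp Vm) (hsimple : P.IsSimplePair)
    (t : Vp →ₗ[F] Vm →ₗ[F] F)
    (hinv : ∀ (R : Type) [CommRing R] [Algebra F R],
      ∀ (DpR : (R ⊗[F] Vp) →ₗ[R] (R ⊗[F] Vm) →ₗ[R] (R ⊗[F] Vp) →ₗ[R] (R ⊗[F] Vp))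
        (DmR : (R ⊗[F] Vm) →ₗ[R] (R ⊗[F] Vp) →ₗ[R] (R ⊗[F] Vm) →ₗ[R] (R ⊗[F] Vm))
        (tR : (R ⊗[F] Vp) →ₗ[R] (R ⊗[F] Vm) →ₗ[R] R),
      (∀ (r s u : R) (x : Vp) (y : Vm) (z : Vp),
          DpR (r ⊗ₜ[F] x) (s ⊗ₜ[F] y) (u ⊗ₜ[F] z) = (r * s * u) ⊗ₜ[F] P.Dp x y z) →
      (∀ (r s u : R) (x : Vm) (y : Vp) (z : Vm),
          DmR (r ⊗ₜ[F] x) (s ⊗ₜ[F] y) (u ⊗ₜ[F] z) = (r * s * u) ⊗ₜ[F] P.Dm x y z) →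
      (∀ (r s : R) (x : Vp) (y : Vm),
          tR (r ⊗ₜ[F] x) (s ⊗ₜ[F] y) = r * s * algebraMap F R (t x y)) →
      ∀ (φp : (R ⊗[F] Vp) ≃ₗ[R] (R ⊗[F] Vp)) (φm : (R ⊗[F] Vm) ≃ₗ[R] (R ⊗[F] Vm)),
        (∀ a b c, φp (DpR a b c) = DpR (φp a) (φm b) (φp c)) →
        (∀ a b c, φm (DmR a b c) = DmR (φm a) (φp b) (φm c)) →
        ∀ a b, tR (φp a) (φm b) = tR a b)
    (G : Type) [AddCommGroup G] [DecidableEq G] (Γ : JPGrading G P) :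
    ∀ g h : G, (∃ x ∈ Γ.gp g, ∃ y ∈ Γ.gm h, t x y ≠ 0) → g + h = 0 := by
  
  classical
  intro g h ⟨x, hx, y, hy, hne⟩
  have key := hinv (AddMonoidAlgebra F G) (triBC P.Dp) (triBC P.Dm) (biBC t)
    (fun r s u x y z => triBC_tmul P.Dp r s u x y z)
    (fun r s u x y z => triBC_tmul P.Dm r s u x y z)
    (fun r s x y => biBC_tmul t r s x y)
    (phiEquiv Γ.gp Γ.int_p) (phiEquiv Γ.gm Γ.int_m)
    (fun a b c => phi_triBC_comm Γ.gp Γ.gm Γ.int_p Γ.int_m P.Dp Γ.mul_p a c b)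
    (fun a b c => phi_triBC_comm Γ.gm Γ.gp Γ.int_m Γ.int_p P.Dm Γ.mul_m a c b)
    ((1 : AddMonoidAlgebra F G) ⊗ₜ[F] x) ((1 : AddMonoidAlgebra F G) ⊗ₜ[F] y)
  rw [phiEquiv_one_tmul Γ.gp Γ.int_p hx, phiEquiv_one_tmul Γ.gm Γ.int_m hy,
    biBC_tmul, biBC_tmul, one_mul, one_mul] at key
  have halg : algebraMap F (AddMonoidAlgebra F G) (t x y)
      = AddMonoidAlgebra.single (0 : G) (t x y) := by
    rw [AddMonoidAlgebra.coe_algebraMap]; simp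
  rw [halg, AddMonoidAlgebra.single_mul_single, AddMonoidAlgebra.single_mul_single,
    one_mul, one_mul, add_zero] at key
  exact (AddMonoidAlgebra.single_left_inj hne).mp key
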